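/- L^q norm of an infinitesimal rigid motion on a square is controlled by its L^q norm on a subset (Lemma 4.3). Let q ∈ [1,∞). There is a constant c = c(q) > 0 such that for every y ∈ ℝ², every R > 0, every Borel set E ⊆ Q_R^y := y + (−R,R)², every skew-symmetric A ∈ ℝ^{2×2} and every b ∈ ℝ², with a(x) = A·x + b, one has |E|^{1/2 + 1/q}·‖a‖_{L^q(Q_R^y)} ≤ c·R^{1 + 2/q}·‖a‖_{L^q(E)} (equivalently, ‖a‖_{L^q(Q_R^y)} ≤ c·(R²·|E|^{−1})^{1/2 + 1/q}·‖a‖_{L^q(E)} whenever |E| > 0). -/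

import Mathlib

open MeasureTheory Set
open scoped ENNReal NNReal

noncomputable section

/-- The Euclidean plane. -/
abbrev E2 := EuclideanSpace ℝ (Fin 2)

/-- Frobenius norm of a `2 × 2` real matrix. -/
def matNorm (A : Matrix (Fin 2) (Fin 2) ℝ) : ℝ :=
  Real.sqrt (∑ i : Fin 2, ∑ j : Fin 2, (A i j) ^ 2)

/-- The infinitesimal rigid motion `a_{A,b} : x ↦ A x + b`. -/
def rigid (A : Matrix (Fin 2) (Fin 2) ℝ) (b : E2) : E2 → E2 :=
  fun x => Matrix.toEuclideanLin A x + b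

/-- The open square `Q_R^y = y + (-R, R)²`. -/
def QsqAt (y : E2) (R : ℝ) : Set E2 := {x | ∀ i : Fin 2, |x i - y i| < R}

lemma cube_vol (c : E2) (s : ℝ) :
    volume {x : E2 | ∀ i : Fin 2, |x i - c i| < s}
      = ENNReal.ofReal (2*s) ^ 2 := by
  have hset : {x : E2 | ∀ i : Fin 2, |x i - c i| < s}
      = (MeasurableEquiv.toLp 2 (Fin 2 → ℝ)).symm ⁻¹'
        (univ.pi fun i => Ioo (c i - s) (c i + s)) := by
    ext x
    simp [MeasurableEquiv.coe_toLp_symm, abs_sub_lt_iff,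
      sub_lt_iff_lt_add, lt_sub_iff_add_lt]
    constructor <;> intro h <;> refine ⟨⟨?_, ?_⟩, ?_, ?_⟩ <;> linarith [h.1.1, h.1.2, h.2.1, h.2.2]
  rw [hset, (EuclideanSpace.volume_preserving_symm_measurableEquiv_toLp (Fin 2)).measure_preimage
    ((MeasurableSet.univ_pi fun i => measurableSet_Ioo).nullMeasurableSet)]
  rw [volume_pi_pi]
  simp [Real.volume_Ioo]
  rw [show s + s = 2*s by ring]
  rw [ENNReal.ofReal_mul (by norm_num)]; norm_num

lemma coord_le_norm (x : E2) (i : Fin 2) : |x i| ≤ ‖x‖ := by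
  rw [EuclideanSpace.norm_eq]
  have h1 : |x i| = Real.sqrt ((x i)^2) := (Real.sqrt_sq_eq_abs _).symm
  rw [h1]
  apply Real.sqrt_le_sqrt
  have : (x i)^2 ≤ ∑ j : Fin 2, ‖x j‖^2 := by
    have := Finset.single_le_sum (f := fun j => ‖x j‖^2) (fun j _ => sq_nonneg _)
      (Finset.mem_univ i)
    simpa [Real.norm_eq_abs, sq_abs] using this
  simpa using this

lemma skew_entries {A : Matrix (Fin 2) (Fin 2) ℝ} (hA : Matrix.transpose A = -A) :
    A 0 0 = 0 ∧ A 1 1 = 0 ∧ A 1 0 = -(A 0 1) := by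
  have h00 := congrFun (congrFun hA 0) 0
  have h11 := congrFun (congrFun hA 1) 1
  have h01 := congrFun (congrFun hA 0) 1
  simp [Matrix.transpose_apply] at h00 h11 h01
  refine ⟨by linarith, by linarith, by linarith⟩

lemma toEuc_apply (A : Matrix (Fin 2) (Fin 2) ℝ) (v : E2) (i : Fin 2) :
    (Matrix.toEuclideanLin A v) i = A i 0 * v 0 + A i 1 * v 1 := by
  rw [Matrix.toEuclideanLin_apply]
  simp [Matrix.mulVec, dotProduct, Fin.sum_univ_two]

lemma skew_norm {A : Matrix (Fin 2) (Fin 2) ℝ} (hA : Matrix.transpose A = -A) (v : E2) :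
    ‖Matrix.toEuclideanLin A v‖ = |A 0 1| * ‖v‖ := by
  obtain ⟨h00, h11, h10⟩ := skew_entries hA
  rw [EuclideanSpace.norm_eq, EuclideanSpace.norm_eq]
  rw [Fin.sum_univ_two, Fin.sum_univ_two]
  rw [Real.norm_eq_abs, Real.norm_eq_abs, Real.norm_eq_abs, Real.norm_eq_abs]
  rw [toEuc_apply, toEuc_apply, h00, h11, h10]
  rw [show |A 0 1| = Real.sqrt ((A 0 1)^2) from (Real.sqrt_sq_eq_abs _).symm,
    ← Real.sqrt_mul (sq_nonneg _)]
  congr 1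
  simp [sq_abs]
  linear_combination (|A 0 1|^2) * (sq_abs (v 0) + sq_abs (v 1)) + (v 0^2 + v 1^2) * sq_abs (A 0 1)

lemma rigid_sub (A : Matrix (Fin 2) (Fin 2) ℝ) (b : E2) (x z : E2) :
    rigid A b x - rigid A b z = Matrix.toEuclideanLin A (x - z) := by
  simp [rigid, map_sub]

lemma rigid_root {A : Matrix (Fin 2) (Fin 2) ℝ} (hA : Matrix.transpose A = -A)
    (b : E2) (hω : A 0 1 ≠ 0) : ∃ x₀ : E2, rigid A b x₀ = 0 := by
  obtain ⟨h00, h11, h10⟩ := skew_entries hA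
  refine ⟨(WithLp.equiv 2 (Fin 2 → ℝ)).symm ![b 1 / A 0 1, -(b 0) / A 0 1], ?_⟩
  ext i
  fin_cases i
  · have h := toEuc_apply A ((WithLp.equiv 2 (Fin 2 → ℝ)).symm ![b 1 / A 0 1, -(b 0) / A 0 1]) 0
    simp [rigid, PiLp.add_apply, h, h00]
    field_simp
    ring
  · have h := toEuc_apply A ((WithLp.equiv 2 (Fin 2 → ℝ)).symm ![b 1 / A 0 1, -(b 0) / A 0 1]) 1
    simp [rigid, PiLp.add_apply, h, h11, h10]
    field_simp
    ring

/-- **The `L^q` norm of an infinitesimal rigid motion on a square is controlled by its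
`L^q` norm on a subset** (Lemma 4.3). -/
theorem rigid_motion_Lq_square (q : ℝ) (hq : 1 ≤ q) :
    ∃ c : ℝ, 0 < c ∧
      ∀ (y : E2) (R : ℝ), 0 < R →
      ∀ E : Set E2, MeasurableSet E → E ⊆ QsqAt y R →
      ∀ A : Matrix (Fin 2) (Fin 2) ℝ, Matrix.transpose A = -A → ∀ b : E2,
        (volume E) ^ ((1 : ℝ) / 2 + 1 / q) *
            eLpNorm (rigid A b) (ENNReal.ofReal q) (volume.restrict (QsqAt y R)) ≤
          ENNReal.ofReal (c * R ^ (1 + 2 / q)) *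
            eLpNorm (rigid A b) (ENNReal.ofReal q) (volume.restrict E) := by
  have hq0 : (0:ℝ) < q := lt_of_lt_of_le one_pos hq
  set c0 : ℝ := 8 * 2^q * (2^q + 3^q * 8^(q/2)) with hc0def
  have hc0 : 0 < c0 := by positivity
  refine ⟨c0 ^ (1/q), Real.rpow_pos_of_pos hc0 _, ?_⟩
  intro y R hR E hEm hEQ A hskew b
  set a : E2 → E2 := rigid A b with hadef
  set ω : ℝ := A 0 1 with hωdef
  have hcont : Continuous a := by
    have h1 : Continuous fun x : E2 => Matrix.toEuclideanLin A x :=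
      (Matrix.toEuclideanLin A).continuous_of_finiteDimensional
    exact h1.add continuous_const
  have hmeas : Measurable fun x : E2 => (‖a x‖₊ : ℝ≥0∞) ^ q :=
    (hcont.measurable.nnnorm.coe_nnreal_ennreal).pow_const q
  have hp0 : (ENNReal.ofReal q) ≠ 0 := by
    simp only [ne_eq, ENNReal.ofReal_eq_zero, not_le]; linarith
  have hpt : (ENNReal.ofReal q) ≠ ⊤ := ENNReal.ofReal_ne_top
  have hptoReal : (ENNReal.ofReal q).toReal = q := ENNReal.toReal_ofReal hq0.le
  rw [eLpNorm_eq_lintegral_rpow_enorm_toReal hp0 hpt, eLpNorm_eq_lintegral_rpow_enorm_toReal hp0 hpt,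
    hptoReal]
  simp only [enorm_eq_nnnorm]
  set IQ := ∫⁻ x, (‖a x‖₊ : ℝ≥0∞) ^ q ∂(volume.restrict (QsqAt y R)) with hIQdef
  set IE := ∫⁻ x, (‖a x‖₊ : ℝ≥0∞) ^ q ∂(volume.restrict E) with hIEdef
  by_cases hE0 : volume E = 0
  · rw [hE0, ENNReal.zero_rpow_of_pos (by positivity), zero_mul]
    exact bot_le
  by_cases hIEtop : IE = ⊤
  · have h1 : IE ^ ((1:ℝ)/q) = ⊤ := by
      rw [hIEtop]; exact ENNReal.top_rpow_of_pos (by positivity)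
    rw [h1, ENNReal.mul_top]
    · exact le_top
    · simp only [ne_eq, ENNReal.ofReal_eq_zero, not_le]
      positivity
  -- main case
  have hQvol : volume (QsqAt y R) = ENNReal.ofReal (2*R) ^ 2 := cube_vol y R
  have hEleQ : volume E ≤ ENNReal.ofReal (2*R) ^ 2 := by
    rw [← hQvol]; exact measure_mono hEQ
  have hEfin : volume E ≠ ⊤ :=
    ne_top_of_le_ne_top (ENNReal.pow_ne_top ENNReal.ofReal_ne_top) hEleQ
  -- Markov: a point where `a` is small
  have hmarkov : ∃ e ∈ E, (‖a e‖₊ : ℝ≥0∞) ^ q * volume E ≤ 2 * IE := by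
    by_contra hcon
    push_neg at hcon
    have hIEpos : IE ≠ 0 := by
      intro h0
      have hae := (lintegral_eq_zero_iff hmeas).mp (hIEdef ▸ h0)
      have hsub : E ⊆ {x | (‖a x‖₊ : ℝ≥0∞) ^ q ≠ 0} := by
        intro e heE
        have h2 := hcon e heE
        rw [h0, mul_zero] at h2
        intro hz
        rw [hz, zero_mul] at h2
        exact lt_irrefl 0 h2
      have hms : MeasurableSet {x : E2 | (‖a x‖₊ : ℝ≥0∞) ^ q ≠ 0} :=
        (hmeas (measurableSet_singleton 0)).compl
      have h3 : (volume.restrict E) {x : E2 | (‖a x‖₊ : ℝ≥0∞) ^ q ≠ 0} = 0 := by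
        have h5 := ae_iff.mp hae
        simpa using h5
      rw [Measure.restrict_apply hms] at h3
      rw [Set.inter_eq_self_of_subset_right hsub] at h3
      exact hE0 h3
    have hconst : ∀ x ∈ E, 2 * IE / volume E ≤ (‖a x‖₊ : ℝ≥0∞) ^ q := fun x hx =>
      (ENNReal.div_le_iff_le_mul (Or.inl hE0) (Or.inl hEfin)).mpr (le_of_lt (hcon x hx))
    have hle : 2 * IE / volume E * volume E ≤ IE := by
      calc 2 * IE / volume E * volume E
          = ∫⁻ x in E, 2 * IE / volume E ∂volume := (setLIntegral_const E _).symm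
        _ ≤ ∫⁻ x in E, (‖a x‖₊ : ℝ≥0∞) ^ q ∂volume := setLIntegral_mono hmeas hconst
        _ = IE := rfl
    rw [ENNReal.div_mul_cancel hE0 hEfin] at hle
    have h2 : IE < 2 * IE := by
      rw [two_mul]; exact ENNReal.lt_add_right hIEtop hIEpos
    exact absurd hle (not_le.mpr h2)
  obtain ⟨e, heE, hα⟩ := hmarkov
  -- sup bound on the square
  have hnormQ : ∀ x ∈ QsqAt y R, ‖a x‖ ≤ ‖a e‖ + |ω| * (3*R) := by
    intro x hx
    have hxe : ‖x - e‖ ≤ 3 * R := by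
      have h1 : ∀ i : Fin 2, |x i - e i| ≤ 2 * R := by
        intro i
        have hxi := hx i
        have hei := hEQ heE i
        calc |x i - e i| = |(x i - y i) - (e i - y i)| := by ring_nf
          _ ≤ |x i - y i| + |e i - y i| := abs_sub _ _
          _ ≤ 2 * R := by linarith [le_of_lt hxi, le_of_lt hei]
      rw [EuclideanSpace.norm_eq, Fin.sum_univ_two]
      have hc0' : ‖(x - e) 0‖ ^ 2 ≤ (2*R)^2 := by
        rw [Real.norm_eq_abs]
        have : |(x - e) 0| ≤ 2*R := by simpa [PiLp.sub_apply] using h1 0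
        nlinarith [abs_nonneg ((x-e) 0)]
      have hc1' : ‖(x - e) 1‖ ^ 2 ≤ (2*R)^2 := by
        rw [Real.norm_eq_abs]
        have : |(x - e) 1| ≤ 2*R := by simpa [PiLp.sub_apply] using h1 1
        nlinarith [abs_nonneg ((x-e) 1)]
      calc Real.sqrt (‖(x - e) 0‖ ^ 2 + ‖(x - e) 1‖ ^ 2)
          ≤ Real.sqrt ((3*R)^2) := by
            apply Real.sqrt_le_sqrt; nlinarith [hR]
        _ = 3 * R := Real.sqrt_sq (by linarith)
    have h2 : ‖a x - a e‖ = |ω| * ‖x - e‖ := by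
      rw [hadef, rigid_sub A b x e, skew_norm hskew]
    calc ‖a x‖ = ‖a e + (a x - a e)‖ := by congr 1; abel
      _ ≤ ‖a e‖ + ‖a x - a e‖ := norm_add_le _ _
      _ = ‖a e‖ + |ω| * ‖x - e‖ := by rw [h2]
      _ ≤ ‖a e‖ + |ω| * (3*R) := by
          have := mul_le_mul_of_nonneg_left hxe (abs_nonneg ω)
          linarith
  -- upper bound on IQ
  have hIQ : IQ ≤ ENNReal.ofReal (2*R) ^ 2 * ENNReal.ofReal (‖a e‖ + |ω| * (3*R)) ^ q := by
    calc IQ ≤ ∫⁻ _x in QsqAt y R, ENNReal.ofReal (‖a e‖ + |ω| * (3*R)) ^ q ∂volume := by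
          apply setLIntegral_mono measurable_const
          intro x hx
          have h1 : (‖a x‖₊ : ℝ≥0∞) ≤ ENNReal.ofReal (‖a e‖ + |ω| * (3*R)) := by
            rw [← enorm_eq_nnnorm, ← ofReal_norm]
            exact ENNReal.ofReal_le_ofReal (hnormQ x hx)
          exact ENNReal.rpow_le_rpow h1 hq0.le
      _ = ENNReal.ofReal (‖a e‖ + |ω| * (3*R)) ^ q * volume (QsqAt y R) :=
          setLIntegral_const _ _
      _ = ENNReal.ofReal (2*R) ^ 2 * ENNReal.ofReal (‖a e‖ + |ω| * (3*R)) ^ q := by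
          rw [hQvol, mul_comm]
  -- sublevel estimate
  have hsubl : (ENNReal.ofReal |ω|) ^ q * ((volume E / 8) ^ (q/2) * (volume E / 2)) ≤ IE := by
    by_cases hω0 : ω = 0
    · rw [hω0]
      simp [ENNReal.zero_rpow_of_pos hq0]
    · obtain ⟨x₀, hx₀⟩ := rigid_root hskew b hω0
      set s : ℝ := Real.sqrt ((volume E).toReal / 8) with hsdef
      have hEpos : 0 < (volume E).toReal := ENNReal.toReal_pos hE0 hEfin
      have hs : 0 < s := Real.sqrt_pos.mpr (by positivity)
      have hs2 : s^2 = (volume E).toReal / 8 := Real.sq_sqrt (by positivity)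
      set t : ℝ := |ω| * s with htdef
      have hωpos : 0 < |ω| := abs_pos.mpr hω0
      have hanorm : ∀ x : E2, ‖a x‖ = |ω| * ‖x - x₀‖ := by
        intro x
        have h1 : a x - a x₀ = Matrix.toEuclideanLin A (x - x₀) := rigid_sub A b x x₀
        rw [show a x₀ = (0:E2) from hx₀, sub_zero] at h1
        rw [h1]
        exact skew_norm hskew _
      have hsmall : {x : E2 | ‖a x‖ < t} ⊆ {x : E2 | ∀ i : Fin 2, |x i - x₀ i| < s} := by
        intro x hx i
        have h2 : ‖x - x₀‖ < s := by
          have h3 : |ω| * ‖x - x₀‖ < |ω| * s := by rw [← hanorm]; exact hx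
          exact (mul_lt_mul_iff_right₀ hωpos).mp h3
        calc |x i - x₀ i| = |(x - x₀) i| := by rw [PiLp.sub_apply]
          _ ≤ ‖x - x₀‖ := coord_le_norm _ i
          _ < s := h2
      have hsmallvol : volume (E ∩ {x : E2 | ‖a x‖ < t}) ≤ volume E / 2 := by
        calc volume (E ∩ {x : E2 | ‖a x‖ < t})
            ≤ volume {x : E2 | ∀ i : Fin 2, |x i - x₀ i| < s} :=
              measure_mono (fun x hx => hsmall hx.2)
          _ = ENNReal.ofReal (2*s) ^ 2 := cube_vol x₀ s
          _ = volume E / 2 := by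
              rw [← ENNReal.ofReal_pow (by positivity)]
              rw [show (2*s)^2 = 4 * s^2 by ring, hs2,
                show 4 * ((volume E).toReal / 8) = (volume E).toReal / 2 by ring]
              rw [ENNReal.ofReal_div_of_pos (by norm_num), ENNReal.ofReal_toReal hEfin]
              norm_num
      set E' := E ∩ {x : E2 | t ≤ ‖a x‖} with hE'def
      have hE'vol : volume E / 2 ≤ volume E' := by
        have hsplit : E ⊆ E' ∪ (E ∩ {x : E2 | ‖a x‖ < t}) := by
          intro x hx
          rcases le_or_gt t ‖a x‖ with h | h
          · exact Or.inl ⟨hx, h⟩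
          · exact Or.inr ⟨hx, h⟩
        have h2 := (measure_mono (μ := volume) hsplit).trans (measure_union_le (μ := volume) E' (E ∩ {x : E2 | ‖a x‖ < t}))
        have h3 : volume E ≤ volume E' + volume E / 2 :=
          h2.trans (add_le_add_right hsmallvol _)
        have h4 : volume E / 2 + volume E / 2 ≤ volume E' + volume E / 2 := by
          rwa [ENNReal.add_halves]
        exact (ENNReal.add_le_add_iff_right (by simp [ENNReal.div_eq_top, hEfin])).mp h4
      have hlow : ENNReal.ofReal t ^ q * (volume E / 2) ≤ IE := by
        calc ENNReal.ofReal t ^ q * (volume E / 2)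
            ≤ ENNReal.ofReal t ^ q * volume E' := mul_le_mul_right hE'vol _
          _ = ∫⁻ _x in E', ENNReal.ofReal t ^ q ∂volume := (setLIntegral_const _ _).symm
          _ ≤ ∫⁻ x in E', (‖a x‖₊ : ℝ≥0∞) ^ q ∂volume := by
              apply setLIntegral_mono hmeas
              intro x hx
              have h1 : ENNReal.ofReal t ≤ (‖a x‖₊ : ℝ≥0∞) := by
                rw [← enorm_eq_nnnorm, ← ofReal_norm]
                exact ENNReal.ofReal_le_ofReal hx.2
              exact ENNReal.rpow_le_rpow h1 hq0.le
          _ ≤ IE := lintegral_mono_set Set.inter_subset_left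
      have hts : ENNReal.ofReal t ^ q
          = ENNReal.ofReal |ω| ^ q * (volume E / 8) ^ (q/2) := by
        rw [htdef, ENNReal.ofReal_mul (abs_nonneg _),
          ENNReal.mul_rpow_of_nonneg _ _ hq0.le]
        congr 1
        rw [ENNReal.ofReal_rpow_of_pos hs]
        have h1 : s ^ q = (s^2) ^ (q/2) := by
          rw [← Real.rpow_natCast s 2, ← Real.rpow_mul hs.le]
          norm_num
          rw [show 2*(q/2) = q by ring]
        rw [h1, hs2]
        rw [← ENNReal.ofReal_rpow_of_pos (by positivity)]
        congr 1
        rw [ENNReal.ofReal_div_of_pos (by norm_num), ENNReal.ofReal_toReal hEfin]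
        norm_num
      calc ENNReal.ofReal |ω| ^ q * ((volume E / 8) ^ (q/2) * (volume E / 2))
          = ENNReal.ofReal t ^ q * (volume E / 2) := by rw [hts]; ring
        _ ≤ IE := hlow
  -- elementary rpow splitting
  have hsplit2 : ∀ u v : ℝ≥0∞, (u + v) ^ q ≤ (2:ℝ≥0∞)^q * (u^q + v^q) := by
    intro u v
    calc (u + v)^q ≤ (2 * max u v)^q := by
          apply ENNReal.rpow_le_rpow _ hq0.le
          rcases le_total u v with h | h
          · rw [max_eq_right h, two_mul]; exact add_le_add h le_rfl
          · rw [max_eq_left h, two_mul]; exact add_le_add le_rfl h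
      _ = 2^q * (max u v)^q := ENNReal.mul_rpow_of_nonneg _ _ hq0.le
      _ ≤ 2^q * (u^q + v^q) := by
          apply mul_le_mul_right
          rcases le_total u v with h | h
          · rw [max_eq_right h]; exact le_add_self
          · rw [max_eq_left h]; exact le_self_add
  -- Term 1 bound
  have hT1 : volume E ^ (1 + q/2 : ℝ) * (ENNReal.ofReal ‖a e‖)^q
      ≤ ENNReal.ofReal (2*R) ^ (q:ℝ) * (2 * IE) := by
    have h1 : volume E ^ (1 + q/2 : ℝ) = volume E ^ (q/2 : ℝ) * volume E := by
      rw [show (1 + q/2 : ℝ) = q/2 + 1 by ring, ENNReal.rpow_add _ _ hE0 hEfin,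
        ENNReal.rpow_one]
    rw [h1, ofReal_norm, enorm_eq_nnnorm]
    calc volume E ^ (q/2:ℝ) * volume E * (‖a e‖₊ : ℝ≥0∞)^q
        = volume E ^ (q/2:ℝ) * ((‖a e‖₊ : ℝ≥0∞)^q * volume E) := by ring
      _ ≤ (ENNReal.ofReal (2*R) ^ 2) ^ (q/2:ℝ) * (2 * IE) :=
          mul_le_mul' (ENNReal.rpow_le_rpow hEleQ (by positivity)) hα
      _ = ENNReal.ofReal (2*R) ^ (q:ℝ) * (2 * IE) := by
          rw [← ENNReal.rpow_natCast (ENNReal.ofReal (2*R)) 2, ← ENNReal.rpow_mul]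
          norm_num
          rw [show (2:ℝ)*(q/2) = q by ring]
  -- Term 2 bound
  have hT2 : volume E ^ (1 + q/2 : ℝ) * (ENNReal.ofReal (|ω| * (3*R)))^q
      ≤ ENNReal.ofReal (3*R) ^ q * ((8:ℝ≥0∞)^(q/2) * (2 * IE)) := by
    have hsplitω : ENNReal.ofReal (|ω| * (3*R))
        = ENNReal.ofReal |ω| * ENNReal.ofReal (3*R) := ENNReal.ofReal_mul (abs_nonneg _)
    rw [hsplitω, ENNReal.mul_rpow_of_nonneg _ _ hq0.le]
    have hkey : volume E ^ (1 + q/2 : ℝ) * ENNReal.ofReal |ω| ^ q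
        ≤ (8:ℝ≥0∞)^(q/2) * (2 * IE) := by
      have h8 : ((8:ℝ≥0∞))^(q/2) * (volume E / 8)^(q/2) = volume E ^ (q/2:ℝ) := by
        rw [← ENNReal.mul_rpow_of_nonneg _ _ (by positivity : (0:ℝ) ≤ q/2)]
        congr 1
        rw [mul_comm]
        exact ENNReal.div_mul_cancel (by norm_num) (by norm_num)
      have h2 : (2:ℝ≥0∞) * (volume E / 2) = volume E := by
        rw [mul_comm]
        exact ENNReal.div_mul_cancel (by norm_num) (by norm_num)
      have hid : volume E ^ (1 + q/2 : ℝ)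
          = (8:ℝ≥0∞)^(q/2) * 2 * ((volume E / 8)^(q/2) * (volume E / 2)) := by
        calc volume E ^ (1 + q/2 : ℝ) = volume E ^ (q/2:ℝ) * volume E := by
              rw [show (1 + q/2 : ℝ) = q/2 + 1 by ring,
                ENNReal.rpow_add _ _ hE0 hEfin, ENNReal.rpow_one]
          _ = ((8:ℝ≥0∞)^(q/2) * (volume E / 8)^(q/2)) * ((2:ℝ≥0∞) * (volume E / 2)) := by
              rw [h8, h2]
          _ = (8:ℝ≥0∞)^(q/2) * 2 * ((volume E / 8)^(q/2) * (volume E / 2)) := by ring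
      rw [hid]
      calc (8:ℝ≥0∞)^(q/2) * 2 * ((volume E / 8)^(q/2) * (volume E / 2))
            * ENNReal.ofReal |ω| ^ q
          = (8:ℝ≥0∞)^(q/2) * 2
            * (ENNReal.ofReal |ω| ^ q * ((volume E / 8)^(q/2) * (volume E / 2))) := by ring
        _ ≤ (8:ℝ≥0∞)^(q/2) * 2 * IE := mul_le_mul_right hsubl _
        _ = (8:ℝ≥0∞)^(q/2) * (2 * IE) := by ring
    calc volume E ^ (1 + q/2 : ℝ) * (ENNReal.ofReal |ω| ^ q * ENNReal.ofReal (3*R) ^ q)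
        = ENNReal.ofReal (3*R) ^ q * (volume E ^ (1 + q/2 : ℝ) * ENNReal.ofReal |ω| ^ q) := by
          ring
      _ ≤ ENNReal.ofReal (3*R) ^ q * ((8:ℝ≥0∞)^(q/2) * (2 * IE)) := mul_le_mul_right hkey _
  -- the key inequality
  have key : volume E ^ (1 + q/2 : ℝ) * IQ ≤ ENNReal.ofReal (c0 * R^(q+2)) * IE := by
    have hβ : ENNReal.ofReal (‖a e‖ + |ω| * (3*R))
        = ENNReal.ofReal ‖a e‖ + ENNReal.ofReal (|ω| * (3*R)) :=
      ENNReal.ofReal_add (norm_nonneg _) (by positivity)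
    calc volume E ^ (1 + q/2 : ℝ) * IQ
        ≤ volume E ^ (1 + q/2 : ℝ) * (ENNReal.ofReal (2*R) ^ 2
            * (ENNReal.ofReal ‖a e‖ + ENNReal.ofReal (|ω| * (3*R)))^q) := by
          apply mul_le_mul_right
          rw [← hβ]
          exact hIQ
      _ ≤ volume E ^ (1 + q/2 : ℝ) * (ENNReal.ofReal (2*R) ^ 2
            * ((2:ℝ≥0∞)^q * ((ENNReal.ofReal ‖a e‖)^q + (ENNReal.ofReal (|ω| * (3*R)))^q))) := by
          apply mul_le_mul_right
          apply mul_le_mul_right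
          exact hsplit2 _ _
      _ = ENNReal.ofReal (2*R) ^ 2 * (2:ℝ≥0∞)^q
            * (volume E ^ (1 + q/2 : ℝ) * (ENNReal.ofReal ‖a e‖)^q
              + volume E ^ (1 + q/2 : ℝ) * (ENNReal.ofReal (|ω| * (3*R)))^q) := by ring
      _ ≤ ENNReal.ofReal (2*R) ^ 2 * (2:ℝ≥0∞)^q
            * (ENNReal.ofReal (2*R) ^ (q:ℝ) * (2 * IE)
              + ENNReal.ofReal (3*R) ^ q * ((8:ℝ≥0∞)^(q/2) * (2 * IE))) :=
          mul_le_mul_right (add_le_add hT1 hT2) _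
      _ = ENNReal.ofReal (c0 * R^(q+2)) * IE := by
          have k1 : (2:ℝ≥0∞)^q = ENNReal.ofReal (2^q) := by
            rw [← ENNReal.ofReal_rpow_of_pos (by norm_num : (0:ℝ) < 2)]
            norm_num
          have k8 : (8:ℝ≥0∞)^(q/2) = ENNReal.ofReal (8^(q/2)) := by
            rw [← ENNReal.ofReal_rpow_of_pos (by norm_num : (0:ℝ) < 8)]
            norm_num
          have k2R : ENNReal.ofReal (2*R) ^ (q:ℝ) = ENNReal.ofReal ((2*R)^q) :=
            ENNReal.ofReal_rpow_of_pos (by positivity)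
          have k3R : ENNReal.ofReal (3*R) ^ (q:ℝ) = ENNReal.ofReal ((3*R)^q) :=
            ENNReal.ofReal_rpow_of_pos (by positivity)
          have k2R2 : ENNReal.ofReal (2*R) ^ (2:ℕ) = ENNReal.ofReal ((2*R)^2) :=
            (ENNReal.ofReal_pow (by positivity) 2).symm
          have ktwo : (2:ℝ≥0∞) = ENNReal.ofReal 2 := by norm_num
          rw [k1, k8, k2R, k3R, k2R2, ktwo]
          have merge : ENNReal.ofReal ((2*R)^2) * ENNReal.ofReal (2^q)
              * (ENNReal.ofReal ((2*R)^q) * (ENNReal.ofReal 2 * IE)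
                + ENNReal.ofReal ((3*R)^q) * (ENNReal.ofReal (8^(q/2)) * (ENNReal.ofReal 2 * IE)))
              = ENNReal.ofReal ((2*R)^2 * 2^q * ((2*R)^q * 2 + (3*R)^q * (8^(q/2) * 2))) * IE := by
            rw [ENNReal.ofReal_mul (by positivity), ENNReal.ofReal_mul (by positivity),
              ENNReal.ofReal_add (by positivity) (by positivity),
              ENNReal.ofReal_mul (by positivity), ENNReal.ofReal_mul (by positivity),
              ENNReal.ofReal_mul (by positivity)]
            ring
          rw [merge]
          congr 2
          rw [Real.mul_rpow (by norm_num : (0:ℝ) ≤ 2) hR.le,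
            Real.mul_rpow (by norm_num : (0:ℝ) ≤ 3) hR.le,
            Real.rpow_add hR q 2, hc0def,
            show R ^ (2:ℝ) = R ^ (2:ℕ) by rw [← Real.rpow_natCast R 2]; norm_num]
          ring
  -- conclude by taking q-th roots
  have h1q : (0:ℝ) ≤ 1/q := by positivity
  have hfin := ENNReal.rpow_le_rpow key h1q
  rw [ENNReal.mul_rpow_of_nonneg _ _ h1q, ENNReal.mul_rpow_of_nonneg _ _ h1q,
    ← ENNReal.rpow_mul (volume E)] at hfin
  rw [show (1 + q/2) * (1/q) = 1/2 + 1/q by field_simp; ring] at hfin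
  have hcfin : (ENNReal.ofReal (c0 * R^(q+2))) ^ ((1:ℝ)/q)
      = ENNReal.ofReal (c0^(1/q) * R^(1 + 2/q)) := by
    rw [ENNReal.ofReal_rpow_of_pos (by positivity)]
    congr 1
    rw [Real.mul_rpow hc0.le (by positivity), ← Real.rpow_mul hR.le]
    congr 2
    field_simp
  rw [hcfin] at hfin
  exact hfin
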